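/- Let $A$ be a C*-algebra and let $x, y \in A_+$ with $y \in \overline{x A}$ (the closure of the right ideal generated by $x$). Then for any positive element $c$ of the minimal unitization $A^\sim$, one has $y c y \precsim x c x$ in the Cuntz subequivalence order on $A$. -/

import Mathlib

open Filter Topology

/-- Cuntz subequivalence `a ≾ b` in a C*-algebra. -/
def CuntzLE {A : Type*} [NonUnitalCStarAlgebra A] (a b : A) : Prop :=
  ∃ v : ℕ → A, Tendsto (fun n => ‖a - v n * b * star (v n)‖) atTop (𝓝 0)

/-- The cut-down `(a - ε)₊` via continuous functional calculus with `t ↦ max (t - ε) 0`. -/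
noncomputable def posCut {A : Type*} [NonUnitalCStarAlgebra A] [PartialOrder A]
    [StarOrderedRing A] (a : A) (ε : ℝ) : A :=
  cfcₙ (fun t : ℝ => max (t - ε) 0) a

private lemma stmt4_aux_bound (c t : ℝ) (hc : 0 < c) :
    |t * (t / (t ^ 2 + c)) * t - t| ≤ Real.sqrt c / 2 := by
  have hd : 0 < t ^ 2 + c := by positivity
  have h1 : t * (t / (t ^ 2 + c)) * t - t = -(t * c) / (t ^ 2 + c) := by
    field_simp; ring
  rw [h1, abs_div, abs_of_pos hd, div_le_iff₀ hd]
  have hs : Real.sqrt c ^ 2 = c := Real.sq_sqrt hc.le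
  have hs0 : 0 < Real.sqrt c := Real.sqrt_pos.mpr hc
  have habs : |(-(t * c))| = |t| * c := by rw [abs_neg, abs_mul, abs_of_pos hc]
  rw [habs]
  nlinarith [abs_nonneg t, sq_abs t,
    mul_nonneg hs0.le (sq_nonneg (|t| - Real.sqrt c))]

set_option maxHeartbeats 1000000 in
/-- If `y ∈ closure (x A)` then `y c y ≾ x c x` for every positive `c` in the unitization
`A⁺¹` (the products `y c y` and `x c x`, computed in the unitization, lie in `A`, and the Cuntz
subequivalence is witnessed in `A`). -/
theorem stmt_4 {A : Type*} [NonUnitalCStarAlgebra A] [PartialOrder A] [StarOrderedRing A]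
    (x y : A) (hx : 0 ≤ x) (hy : 0 ≤ y)
    (hmem : y ∈ closure {w : A | ∃ a : A, w = x * a})
    (c : Unitization ℂ A) (hc : 0 ≤ c) :
    CuntzLE (((Unitization.inr y : Unitization ℂ A) * c * Unitization.inr y).snd)
      (((Unitization.inr x : Unitization ℂ A) * c * Unitization.inr x).snd) := by
  have hsa : IsSelfAdjoint x := hx.isSelfAdjoint
  have hysa : IsSelfAdjoint y := hy.isSelfAdjoint
  set cs : ℕ → ℝ := fun n => 1 / (n + 1) with hcs
  have hcpos : ∀ n, 0 < cs n := fun n => by positivity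
  set f : ℕ → ℝ → ℝ := fun n t => t / (t ^ 2 + cs n) with hfdef
  set h : ℕ → A := fun n => cfcₙ (f n) x with hhdef
  have hfc : ∀ n, Continuous (f n) := fun n =>
    continuous_id.div (by continuity) (fun t => by positivity)
  have hf0 : ∀ n, f n 0 = 0 := fun n => by simp [hfdef]
  have hsah : ∀ n, IsSelfAdjoint (h n) := fun n => cfcₙ_predicate (f n) x
  have h1 : ∀ n, cfcₙ (fun t : ℝ => t * f n t) x = x * h n := by
    intro n
    have := cfcₙ_mul (fun t : ℝ => t) (f n) x continuousOn_id rfl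
      (hfc n).continuousOn (hf0 n)
    rwa [cfcₙ_id' ℝ x hsa] at this
  have h2 : ∀ n, cfcₙ (fun t : ℝ => t * f n t * t) x = x * h n * x := by
    intro n
    have := cfcₙ_mul (fun t : ℝ => t * f n t) (fun t : ℝ => t) x
      (by fun_prop) (by simp [hf0 n]) continuousOn_id rfl
    rwa [cfcₙ_id' ℝ x hsa, h1 n] at this
  have hn1 : ∀ n, ‖x * h n‖ ≤ 1 := by
    intro n
    rw [← h1 n]
    apply norm_cfcₙ_le
    intro t _
    have hd : 0 < t ^ 2 + cs n := by positivity
    have he : t * f n t = t ^ 2 / (t ^ 2 + cs n) := by rw [hfdef]; ring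
    rw [Real.norm_eq_abs, he, abs_div, abs_of_pos hd, abs_of_nonneg (sq_nonneg t),
      div_le_one hd]
    linarith [(hcpos n)]
  have hn2 : ∀ n, ‖x * h n * x - x‖ ≤ Real.sqrt (cs n) / 2 := by
    intro n
    have key : x * h n * x - x = cfcₙ (fun t : ℝ => t * f n t * t - t) x := by
      have := cfcₙ_sub (fun t : ℝ => t * f n t * t) (fun t : ℝ => t) x
        (by fun_prop) (by simp [hf0 n]) continuousOn_id rfl
      rw [cfcₙ_id' ℝ x hsa, h2 n] at this
      exact this.symm
    rw [key]
    apply norm_cfcₙ_le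
    intro t _
    rw [Real.norm_eq_abs, hfdef]
    exact stmt4_aux_bound (cs n) t (hcpos n)
  have habound : ∀ (n : ℕ) (a : A),
      ‖y - x * h n * y‖ ≤ 2 * ‖y - x * a‖ + ‖x * h n * x - x‖ * ‖a‖ := by
    intro n a
    have key : y - x * h n * y
        = (y - x * a) - (x * h n) * (y - x * a) - (x * h n * x - x) * a := by
      noncomm_ring
    calc ‖y - x * h n * y‖
        = ‖(y - x * a) - (x * h n) * (y - x * a) - (x * h n * x - x) * a‖ := by rw [key]
      _ ≤ ‖(y - x * a) - (x * h n) * (y - x * a)‖ + ‖(x * h n * x - x) * a‖ :=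
          norm_sub_le _ _
      _ ≤ ‖y - x * a‖ + ‖(x * h n) * (y - x * a)‖ + ‖(x * h n * x - x) * a‖ := by
          gcongr; exact norm_sub_le _ _
      _ ≤ ‖y - x * a‖ + ‖x * h n‖ * ‖y - x * a‖ + ‖x * h n * x - x‖ * ‖a‖ := by
          gcongr <;> exact norm_mul_le _ _
      _ ≤ 2 * ‖y - x * a‖ + ‖x * h n * x - x‖ * ‖a‖ := by
          nlinarith [hn1 n, norm_nonneg (y - x * a)]
  have hg0 : Tendsto (fun n => ‖y - x * h n * y‖) atTop (𝓝 0) := by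
    rw [Metric.tendsto_atTop]
    intro ε hε
    obtain ⟨w, hw_mem, hw⟩ := Metric.mem_closure_iff.mp hmem (ε / 4) (by positivity)
    obtain ⟨a, rfl⟩ := hw_mem
    rw [dist_eq_norm] at hw
    have hsqrt : Tendsto (fun n : ℕ => Real.sqrt (cs n) / 2 * ‖a‖) atTop (𝓝 0) := by
      have hc1 : Tendsto (fun n : ℕ => cs n) atTop (𝓝 0) := by
        simpa [hcs] using tendsto_one_div_add_atTop_nhds_zero_nat (𝕜 := ℝ)
      have := (Real.continuous_sqrt.tendsto' 0 0 (by simp)).comp hc1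
      simpa using (this.div_const 2).mul_const ‖a‖
    obtain ⟨N, hN⟩ := Metric.tendsto_atTop.mp hsqrt (ε / 2) (by positivity)
    refine ⟨N, fun n hn => ?_⟩
    rw [Real.dist_0_eq_abs, abs_of_nonneg (norm_nonneg _)]
    have h3 := hN n hn
    rw [Real.dist_0_eq_abs, abs_of_nonneg (by positivity)] at h3
    have h4 : ‖x * h n * x - x‖ * ‖a‖ ≤ Real.sqrt (cs n) / 2 * ‖a‖ :=
      mul_le_mul_of_nonneg_right (hn2 n) (norm_nonneg a)
    calc ‖y - x * h n * y‖ ≤ 2 * ‖y - x * a‖ + ‖x * h n * x - x‖ * ‖a‖ := habound n a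
      _ < 2 * (ε / 4) + ε / 2 := by
          have : ‖x * h n * x - x‖ * ‖a‖ < ε / 2 := lt_of_le_of_lt h4 h3
          linarith
      _ = ε := by ring
  refine ⟨fun n => y * h n, ?_⟩
  have key : ∀ n,
      ‖((Unitization.inr y : Unitization ℂ A) * c * Unitization.inr y).snd
        - (y * h n) * ((Unitization.inr x : Unitization ℂ A) * c * Unitization.inr x).snd
          * star (y * h n)‖
      ≤ 2 * ‖y‖ * ‖c‖ * ‖y - x * h n * y‖ := by
    intro n
    set Y : Unitization ℂ A := Unitization.inr y with hY
    set X : Unitization ℂ A := Unitization.inr x with hX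
    set H : Unitization ℂ A := Unitization.inr (h n) with hH
    have sY : star Y = Y := by rw [hY, ← Unitization.inr_star, hysa.star_eq]
    have sX : star X = X := by rw [hX, ← Unitization.inr_star, hsa.star_eq]
    have sH : star H = H := by rw [hH, ← Unitization.inr_star, (hsah n).star_eq]
    have hYe : (Unitization.inr ((Y * c * Y).snd) : Unitization ℂ A) = Y * c * Y := by
      ext
      · simp [hY]
      · simp
    have hXe : (Unitization.inr ((X * c * X).snd) : Unitization ℂ A) = X * c * X := by
      ext
      · simp [hX]
      · simp
    have hstar : star (y * h n) = h n * y := by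
      rw [star_mul, (hsah n).star_eq, hysa.star_eq]
    have step1e : (Unitization.inr ((Y * c * Y).snd
          - (y * h n) * (X * c * X).snd * star (y * h n)) : Unitization ℂ A)
        = Y * c * Y - (Y * H) * (X * c * X) * (H * Y) := by
      rw [hstar, Unitization.inr_sub ℂ, Unitization.inr_mul ℂ, Unitization.inr_mul ℂ,
        Unitization.inr_mul ℂ, Unitization.inr_mul ℂ, hXe, hYe]
    have step1 : ‖(Y * c * Y).snd - (y * h n) * (X * c * X).snd * star (y * h n)‖
        = ‖Y * c * Y - (Y * H) * (X * c * X) * (H * Y)‖ := by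
      rw [← Unitization.norm_inr (𝕜 := ℂ), step1e]
    have alg : Y * c * Y - (Y * H) * (X * c * X) * (H * Y)
        = Y * c * (Y - X * H * Y) + (Y - Y * H * X) * c * (X * H * Y) := by
      noncomm_ring
    have e1 : Y - X * H * Y = Unitization.inr (y - x * h n * y) := by
      rw [Unitization.inr_sub ℂ, Unitization.inr_mul ℂ, Unitization.inr_mul ℂ]
    have e2 : Y - Y * H * X = star (Y - X * H * Y) := by
      rw [star_sub, sY, star_mul, star_mul, sY, sH, sX, mul_assoc]
    have n1 : ‖Y - X * H * Y‖ = ‖y - x * h n * y‖ := by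
      rw [e1, Unitization.norm_inr]
    have n2 : ‖Y - Y * H * X‖ = ‖y - x * h n * y‖ := by
      rw [e2, norm_star, n1]
    have n3 : ‖X * H * Y‖ ≤ ‖y‖ := by
      have hXH : X * H = Unitization.inr (x * h n) := by
        rw [Unitization.inr_mul ℂ]
      calc ‖X * H * Y‖ ≤ ‖X * H‖ * ‖Y‖ := norm_mul_le _ _
        _ ≤ 1 * ‖y‖ := by
            rw [hXH, hY, Unitization.norm_inr, Unitization.norm_inr]
            exact mul_le_mul_of_nonneg_right (hn1 n) (norm_nonneg y)
        _ = ‖y‖ := one_mul _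
    have nY : ‖Y‖ = ‖y‖ := by rw [hY, Unitization.norm_inr]
    rw [step1, alg]
    calc ‖Y * c * (Y - X * H * Y) + (Y - Y * H * X) * c * (X * H * Y)‖
        ≤ ‖Y * c * (Y - X * H * Y)‖ + ‖(Y - Y * H * X) * c * (X * H * Y)‖ :=
          norm_add_le _ _
      _ ≤ ‖Y‖ * ‖c‖ * ‖Y - X * H * Y‖ + ‖Y - Y * H * X‖ * ‖c‖ * ‖X * H * Y‖ := by
          gcongr
          · calc ‖Y * c * (Y - X * H * Y)‖ ≤ ‖Y * c‖ * ‖Y - X * H * Y‖ := norm_mul_le _ _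
              _ ≤ ‖Y‖ * ‖c‖ * ‖Y - X * H * Y‖ := by
                  gcongr; exact norm_mul_le _ _
          · calc ‖(Y - Y * H * X) * c * (X * H * Y)‖
                ≤ ‖(Y - Y * H * X) * c‖ * ‖X * H * Y‖ := norm_mul_le _ _
              _ ≤ ‖Y - Y * H * X‖ * ‖c‖ * ‖X * H * Y‖ := by
                  gcongr; exact norm_mul_le _ _
      _ ≤ ‖y‖ * ‖c‖ * ‖y - x * h n * y‖ + ‖y - x * h n * y‖ * ‖c‖ * ‖y‖ := by
          rw [n1, n2, nY]
          gcongr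
      _ = 2 * ‖y‖ * ‖c‖ * ‖y - x * h n * y‖ := by ring
  refine squeeze_zero (fun n => norm_nonneg _) key ?_
  simpa using hg0.const_mul (2 * ‖y‖ * ‖c‖)
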